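/- Let q be an odd prime power, let 𝔽_q be the finite field with q elements, and let k ∈ 𝔽_q. Then no nonzero homogeneous polynomial of degree 1 in 𝔽_q[x,y,z] divides the polynomial F_k = x²(x^q y − x y^q) + y²(y^q z − y z^q) + (z² + k x²)(z^q x − z x^q); that is, the plane-filling curve C_k = {F_k = 0} has no 𝔽_q-linear component. -/

import Mathlib

open MvPolynomial

/-- The plane-filling polynomial
`F_k = x²(x^q y − x y^q) + y²(y^q z − y z^q) + (z² + k x²)(z^q x − z x^q)`. -/
noncomputable def planeFillingPoly {F : Type*} [Field F] (q : ℕ) (k : F) :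
    MvPolynomial (Fin 3) F :=
  X 0 ^ 2 * (X 0 ^ q * X 1 - X 0 * X 1 ^ q)
    + X 1 ^ 2 * (X 1 ^ q * X 2 - X 1 * X 2 ^ q)
    + (X 2 ^ 2 + C k * X 0 ^ 2) * (X 2 ^ q * X 0 - X 2 * X 0 ^ q)

private lemma deg_three (d : Fin 3 →₀ ℕ) : d.degree = d 0 + d 1 + d 2 := by
  rw [Finsupp.degree_apply, Finset.sum_subset (Finset.subset_univ d.support)
    (fun i _ hi => Finsupp.notMem_support_iff.mp hi), Fin.sum_univ_three]

private lemma single_of_deg_one {d : Fin 3 →₀ ℕ} (h : d 0 + d 1 + d 2 = 1) :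
    d = Finsupp.single 0 1 ∨ d = Finsupp.single 1 1 ∨ d = Finsupp.single 2 1 := by
  have h3 : (d 0 = 1 ∧ d 1 = 0 ∧ d 2 = 0) ∨ (d 0 = 0 ∧ d 1 = 1 ∧ d 2 = 0) ∨
      (d 0 = 0 ∧ d 1 = 0 ∧ d 2 = 1) := by omega
  rcases h3 with ⟨h0, h1, h2⟩ | ⟨h0, h1, h2⟩ | ⟨h0, h1, h2⟩
  · exact Or.inl (Finsupp.ext fun j => by fin_cases j <;> simp [Finsupp.single_apply, h0, h1, h2])
  · exact Or.inr (Or.inl (Finsupp.ext fun j => by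
      fin_cases j <;> simp [Finsupp.single_apply, h0, h1, h2]))
  · exact Or.inr (Or.inr (Finsupp.ext fun j => by
      fin_cases j <;> simp [Finsupp.single_apply, h0, h1, h2]))

private lemma hom1_decomp {F : Type*} [Field F] {L : MvPolynomial (Fin 3) F}
    (h : L.IsHomogeneous 1) :
    L = C (coeff (Finsupp.single 0 1) L) * X 0 + C (coeff (Finsupp.single 1 1) L) * X 1
      + C (coeff (Finsupp.single 2 1) L) * X 2 := by
  ext d
  classical
  simp only [coeff_add, coeff_C_mul, coeff_X', mul_ite, mul_one, mul_zero]
  by_cases hdeg : d.degree = 1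
  · rcases single_of_deg_one (by rw [← deg_three]; exact hdeg) with h0 | h0 | h0 <;>
      subst h0 <;>
      simp [Finsupp.single_eq_single_iff]
  · have hc : coeff d L = 0 := h.coeff_eq_zero hdeg
    have e0 : ¬ (Finsupp.single (0 : Fin 3) 1 = d) := fun e => hdeg (by
      rw [← e, deg_three]; simp)
    have e1 : ¬ (Finsupp.single (1 : Fin 3) 1 = d) := fun e => hdeg (by
      rw [← e, deg_three]; simp)
    have e2 : ¬ (Finsupp.single (2 : Fin 3) 1 = d) := fun e => hdeg (by
      rw [← e, deg_three]; simp)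
    rw [hc, if_neg e0, if_neg e1, if_neg e2]
    simp

private lemma quad_coeffs {F : Type*} [Field F] {u v w : F}
    (h : Polynomial.C u * Polynomial.X ^ 2 + Polynomial.C v * Polynomial.X + Polynomial.C w = 0) :
    u = 0 ∧ v = 0 ∧ w = 0 := by
  refine ⟨?_, ?_, ?_⟩
  · have := congrArg (fun P => Polynomial.coeff P 2) h
    simpa [Polynomial.coeff_X] using this
  · have := congrArg (fun P => Polynomial.coeff P 1) h
    simpa [Polynomial.coeff_X] using this
  · have := congrArg (fun P => Polynomial.coeff P 0) h
    simpa [Polynomial.coeff_X] using this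

/-- For odd `q`, the plane-filling curve `C_k` has no `𝔽_q`-linear component: no nonzero
homogeneous degree-1 polynomial over `𝔽_q` divides `F_k`. -/
theorem no_linear_component {F : Type*} [Field F] [Fintype F]
    (q : ℕ) (hq : Fintype.card F = q) (hodd : Odd q) (k : F) :
    ¬ ∃ L : MvPolynomial (Fin 3) F, L ≠ 0 ∧ L.IsHomogeneous 1 ∧
      L ∣ planeFillingPoly q k := by
  rintro ⟨L, hL0, hLhom, M, hFM⟩
  haveI : CharP F (ringChar F) := ringChar.charP F
  obtain ⟨n, hp, hcard⟩ := FiniteField.card F (ringChar F)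
  haveI : Fact (ringChar F).Prime := ⟨hp⟩
  have hqpn : q = ringChar F ^ (n : ℕ) := hq.symm.trans hcard
  have hq2 : 2 ≤ q := hq ▸ Fintype.one_lt_card
  have hp2 : ringChar F ≠ 2 := by
    intro h
    have hdvd : ringChar F ∣ q := hqpn ▸ dvd_pow_self (ringChar F) n.ne_zero
    rw [h] at hdvd
    exact (Nat.not_even_iff_odd.mpr hodd) (even_iff_two_dvd.mpr hdvd)
  have h2F : (2 : F) ≠ 0 := fun h =>
    hp2 ((Nat.prime_dvd_prime_iff_eq hp Nat.prime_two).mp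
      ((CharP.cast_eq_zero_iff F (ringChar F) 2).mp (by exact_mod_cast h)))
  have hfrob : ∀ u v : Polynomial F, (u + v) ^ q = u ^ q + v ^ q := fun u v => by
    rw [hqpn]; exact add_pow_char_pow u v _ _
  have hCpow : ∀ t : F, (Polynomial.C t) ^ q = Polynomial.C t := fun t => by
    rw [← map_pow, ← hq, FiniteField.pow_card]
  have hg : (Polynomial.X : Polynomial F) ^ q - Polynomial.X ≠ 0 := by
    intro h
    have h' : (Polynomial.X : Polynomial F) ^ q = Polynomial.X := sub_eq_zero.mp h
    have hdeg := congrArg Polynomial.natDegree h'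
    rw [Polynomial.natDegree_X_pow, Polynomial.natDegree_X] at hdeg
    omega
  set a := coeff (Finsupp.single 0 1) L with ha_def
  set b := coeff (Finsupp.single 1 1) L with hb_def
  set c := coeff (Finsupp.single 2 1) L with hc_def
  have hLdec : L = C a * X 0 + C b * X 1 + C c * X 2 := hom1_decomp hLhom
  by_cases hc : c = 0
  · by_cases hb : b = 0
    · -- L = a·x with a ≠ 0 ; substitute x ↦ 0, y ↦ X, z ↦ 1
      have ha : a ≠ 0 := by
        intro ha
        apply hL0
        rw [hLdec, ha, hb, hc]; simp
      set Φ := aeval (R := F) ![(0 : Polynomial F), Polynomial.X, 1]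
      have hΦL : Φ L = 0 := by
        rw [hLdec]
        simp [Φ, hb, hc]
      have hΦF : Φ (planeFillingPoly q k) = 0 := by
        rw [hFM, map_mul, hΦL, zero_mul]
      have hkey : Φ (planeFillingPoly q k)
          = (Polynomial.X ^ q - Polynomial.X) *
            (Polynomial.C (1 : F) * Polynomial.X ^ 2 + Polynomial.C (0 : F) * Polynomial.X
              + Polynomial.C (0 : F)) := by
        simp only [Φ, planeFillingPoly, map_add, map_sub, map_mul, map_pow, aeval_X, aeval_C,
          Matrix.cons_val_zero, Matrix.cons_val_one, Matrix.head_cons, Matrix.cons_val_two,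
          Matrix.tail_cons, Polynomial.algebraMap_eq, map_zero, map_one, one_pow,
          zero_pow (show q ≠ 0 by omega)]
        ring
      rw [hΦF] at hkey
      rcases mul_eq_zero.mp hkey.symm with h | h
      · exact hg h
      · exact one_ne_zero (quad_coeffs h).1
    · -- c = 0, b ≠ 0 : substitute x ↦ b·X, y ↦ -a·X, z ↦ b
      set Φ := aeval (R := F)
        ![Polynomial.C b * Polynomial.X, -(Polynomial.C a * Polynomial.X), Polynomial.C b]
      have hΦL : Φ L = 0 := by
        rw [hLdec]
        simp only [Φ, map_add, map_mul, aeval_X, aeval_C, Matrix.cons_val_zero,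
          Matrix.cons_val_one, Matrix.head_cons, Matrix.cons_val_two, Matrix.tail_cons,
          Polynomial.algebraMap_eq, hc, map_zero]
        ring
      have hΦF : Φ (planeFillingPoly q k) = 0 := by
        rw [hFM, map_mul, hΦL, zero_mul]
      have hkey : Φ (planeFillingPoly q k)
          = (Polynomial.X ^ q - Polynomial.X) *
            (Polynomial.C (-(a ^ 3 * b + k * b ^ 4)) * Polynomial.X ^ 2
              + Polynomial.C (0 : F) * Polynomial.X + Polynomial.C (-(b ^ 4))) := by
        simp only [Φ, planeFillingPoly, map_add, map_sub, map_mul, map_pow, map_neg, aeval_X,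
          aeval_C, Matrix.cons_val_zero, Matrix.cons_val_one, Matrix.head_cons,
          Matrix.cons_val_two, Matrix.tail_cons, Polynomial.algebraMap_eq, map_zero,
          Odd.neg_pow hodd, mul_pow, hCpow]
        ring
      rw [hΦF] at hkey
      rcases mul_eq_zero.mp hkey.symm with h | h
      · exact hg h
      · have hw := (quad_coeffs h).2.2
        have hb4 : b ^ 4 = 0 := neg_eq_zero.mp hw
        exact hb (pow_eq_zero_iff (show (4:ℕ) ≠ 0 by norm_num) |>.mp hb4)
  · -- c ≠ 0 : substitute x ↦ c·X, y ↦ c, z ↦ -(a·X + b)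
    set Φ := aeval (R := F)
      ![Polynomial.C c * Polynomial.X, Polynomial.C c,
        -(Polynomial.C a * Polynomial.X + Polynomial.C b)]
    have hΦL : Φ L = 0 := by
      rw [hLdec]
      simp only [Φ, map_add, map_mul, aeval_X, aeval_C, Matrix.cons_val_zero,
        Matrix.cons_val_one, Matrix.head_cons, Matrix.cons_val_two, Matrix.tail_cons,
        Polynomial.algebraMap_eq]
      ring
    have hΦF : Φ (planeFillingPoly q k) = 0 := by
      rw [hFM, map_mul, hΦL, zero_mul]
    have hZq : (-(Polynomial.C a * Polynomial.X + Polynomial.C b)) ^ q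
        = -(Polynomial.C a * Polynomial.X ^ q + Polynomial.C b) := by
      rw [Odd.neg_pow hodd, hfrob, mul_pow, hCpow, hCpow]
    have hkey : Φ (planeFillingPoly q k)
        = (Polynomial.X ^ q - Polynomial.X) * (Polynomial.C c *
          (Polynomial.C (c ^ 3 + a ^ 2 * b + k * b * c ^ 2) * Polynomial.X ^ 2
            + Polynomial.C (2 * a * b ^ 2) * Polynomial.X
            + Polynomial.C (a * c ^ 2 + b ^ 3))) := by
      simp only [Φ, planeFillingPoly, map_add, map_sub, map_mul, map_pow, aeval_X, aeval_C,
        Matrix.cons_val_zero, Matrix.cons_val_one, Matrix.head_cons, Matrix.cons_val_two,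
        Matrix.tail_cons, Polynomial.algebraMap_eq, hZq, mul_pow, hCpow, map_ofNat]
      ring
    rw [hΦF] at hkey
    rcases mul_eq_zero.mp hkey.symm with h | h
    · exact hg h
    · rcases mul_eq_zero.mp h with h | h
      · exact hc (by simpa using h)
      · obtain ⟨h2, h1, h0⟩ := quad_coeffs h
        have hb : b ≠ 0 := by
          intro hb
          rw [hb] at h2
          simp at h2
          exact hc h2
        have ha : a = 0 := by
          rcases mul_eq_zero.mp h1 with h | h
          · rcases mul_eq_zero.mp h with h | h
            · exact absurd h h2F
            · exact h
          · exact absurd (pow_eq_zero_iff (by norm_num) |>.mp h) hb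
        rw [ha] at h0
        simp at h0
        exact hb h0
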